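/- For every integer n ≥ 3, every set of C(2n-4, n-2) + 1 points in the plane in general position contains n points in convex position; that is, f(n) ≤ C(2n-4, n-2) + 1. -/

import Mathlib

/-!
Common definitions: points in the plane, general position, distinct x-coordinates,
cups, caps, convex position, and the combinatorial functions from the paper.
-/

open Finset

/-- A point in the Euclidean plane, with `p.1` its x-coordinate and `p.2` its y-coordinate. -/
abbrev Pt : Type := ℝ × ℝ

/-- A set of points is in general position if no three (distinct) of its points are collinear. -/
def GenPos (S : Set Pt) : Prop :=
  ∀ p ∈ S, ∀ q ∈ S, ∀ r ∈ S, p ≠ q → p ≠ r → q ≠ r → ¬ Collinear ℝ ({p, q, r} : Set Pt)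

/-- A set of points has pairwise distinct x-coordinates. -/
def DistinctX (S : Set Pt) : Prop :=
  ∀ p ∈ S, ∀ q ∈ S, p ≠ q → p.1 ≠ q.1

/-- The slope of the segment from `p` to `q`. -/
noncomputable def PtSlope (p q : Pt) : ℝ := (q.2 - p.2) / (q.1 - p.1)

/-- `f 0, f 1, …, f (k-1)` is a `k`-cup in `P`: the points lie in `P`, are listed in
increasing order of x-coordinate, and the slopes of consecutive segments strictly increase. -/
def IsCupSeq (k : ℕ) (P : Set Pt) (f : ℕ → Pt) : Prop :=
  (∀ i, i < k → f i ∈ P) ∧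
  (∀ i j, i < j → j < k → (f i).1 < (f j).1) ∧
  (∀ i, i + 2 < k → PtSlope (f i) (f (i + 1)) < PtSlope (f (i + 1)) (f (i + 2)))

/-- `f 0, f 1, …, f (k-1)` is a `k`-cap in `P`: the points lie in `P`, are listed in
increasing order of x-coordinate, and the slopes of consecutive segments strictly decrease. -/
def IsCapSeq (k : ℕ) (P : Set Pt) (f : ℕ → Pt) : Prop :=
  (∀ i, i < k → f i ∈ P) ∧
  (∀ i j, i < j → j < k → (f i).1 < (f j).1) ∧
  (∀ i, i + 2 < k → PtSlope (f i) (f (i + 1)) > PtSlope (f (i + 1)) (f (i + 2)))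

/-- `P` contains a `k`-cup. -/
def HasCup (k : ℕ) (P : Set Pt) : Prop := ∃ f : ℕ → Pt, IsCupSeq k P f

/-- `P` contains a `k`-cap. -/
def HasCap (k : ℕ) (P : Set Pt) : Prop := ∃ f : ℕ → Pt, IsCapSeq k P f

/-- `S` is `(n, m)`-free: it contains no `n`-cup and no `m`-cap. -/
def IsFree (n m : ℕ) (S : Set Pt) : Prop := ¬ HasCup n S ∧ ¬ HasCap m S

/-- A set of points is in convex position: every point of the set is a vertex (extreme point)
of its convex hull, i.e. no point lies in the convex hull of the others. -/
def ConvexPos (S : Set Pt) : Prop := ∀ p ∈ S, p ∉ convexHull ℝ (S \ {p})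

/-- `S` contains `n` points in convex position. -/
def HasConvexNGon (n : ℕ) (S : Set Pt) : Prop :=
  ∃ T : Finset Pt, ↑T ⊆ S ∧ T.card = n ∧ ConvexPos ↑T

/-- The set of cardinalities of finite planar point sets, in general position with pairwise
distinct x-coordinates, containing no `n`-cup and no `m`-cap.  The Erdős–Szekeres cup–cap
number `f(n, m)` is the greatest element of this set. -/
def CupCapCards (n m : ℕ) : Set ℕ :=
  {N : ℕ | ∃ S : Finset Pt, S.card = N ∧ GenPos ↑S ∧ DistinctX ↑S ∧
    ¬ HasCup n ↑S ∧ ¬ HasCap m ↑S}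

/-- The defining property of the Erdős–Szekeres number `f(n) = N`: `N` is the smallest
positive integer such that every set of `N` points in general position in the plane
contains `n` points in convex position. -/
def IsESNumber (n N : ℕ) : Prop :=
  IsLeast {N : ℕ | 0 < N ∧
    ∀ S : Finset Pt, GenPos ↑S → S.card = N → HasConvexNGon n ↑S} N

/-- The point `r` lies strictly below the (non-vertical) line through `p` and `q`. -/
noncomputable def StrictlyBelow (p q r : Pt) : Prop :=
  r.2 < p.2 + PtSlope p q * (r.1 - p.1)

/-- The point `s ∈ S` is `(m, l)`-good: for every `n ≥ 4` and every finite set `B` of at most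
`n - 2` points such that `S ∪ B` is in general position with pairwise distinct x-coordinates
and contains an `(n-1)`-cup with leftmost point `s` and rightmost point in `B`, the set
`S ∪ B` contains an `l`-cap whose two rightmost points lie in `S`, or an `m`-cup whose two
leftmost points lie in `S`, or `n` points in convex position. -/
def IsGoodPoint (m l : ℕ) (S : Finset Pt) (s : Pt) : Prop :=
  ∀ n : ℕ, 4 ≤ n → ∀ B : Finset Pt, B.card ≤ n - 2 →
    GenPos ↑(S ∪ B) → DistinctX ↑(S ∪ B) →
    (∃ f : ℕ → Pt, IsCupSeq (n - 1) ↑(S ∪ B) f ∧ f 0 = s ∧ f (n - 2) ∈ B) →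
    ((∃ f : ℕ → Pt, IsCapSeq l ↑(S ∪ B) f ∧ f (l - 2) ∈ S ∧ f (l - 1) ∈ S) ∨
     (∃ f : ℕ → Pt, IsCupSeq m ↑(S ∪ B) f ∧ f 0 ∈ S ∧ f 1 ∈ S) ∨
     HasConvexNGon n ↑(S ∪ B))

/-- The weight functions `wᵢ(m, k)` from the paper. -/
def w (i m k : ℕ) : ℕ :=
  if i = 4 then
    Nat.choose (m + k - 6) (k - 2) + Nat.choose (m + k - 7) (k - 3) +
      2 * Nat.choose (m + k - 8) (k - 4)
  else if k < i then 0
  else (i - 1) * Nat.choose (m + k - i - 4) (k - i)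

/-- `g(m, l) = Σ_{i=4}^{∞} wᵢ(m, l) = Σ_{i=4}^{l} wᵢ(m, l)` (the sum is finite since
`wᵢ(m, l) = 0` for `i > l`). -/
def g (m l : ℕ) : ℕ := ∑ i ∈ Finset.Icc 4 l, w i m l

section ESHelpers

lemma slope_comb {p q r : Pt} (h1 : p.1 < q.1) (h2 : q.1 < r.1) :
    PtSlope p r = ((q.1 - p.1) * PtSlope p q + (r.1 - q.1) * PtSlope q r) / (r.1 - p.1) := by
  have hpq : q.1 - p.1 ≠ 0 := by linarith
  have hqr : r.1 - q.1 ≠ 0 := by linarith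
  have hpr : r.1 - p.1 ≠ 0 := by linarith
  unfold PtSlope
  field_simp
  ring

lemma slope_between {p q r : Pt} (h1 : p.1 < q.1) (h2 : q.1 < r.1)
    (h : PtSlope p q < PtSlope q r) :
    PtSlope p q < PtSlope p r ∧ PtSlope p r < PtSlope q r := by
  have hpos : (0:ℝ) < r.1 - p.1 := by linarith
  have hb : (0:ℝ) < r.1 - q.1 := by linarith
  have ha : (0:ℝ) < q.1 - p.1 := by linarith
  constructor
  · rw [slope_comb h1 h2, lt_div_iff₀ hpos]
    nlinarith
  · rw [slope_comb h1 h2, div_lt_iff₀ hpos]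
    nlinarith

lemma collinear_of_slope_eq {p q r : Pt} (h1 : p.1 < q.1) (h2 : q.1 < r.1)
    (h : PtSlope p q = PtSlope q r) : Collinear ℝ ({p, q, r} : Set Pt) := by
  have hpr : PtSlope p r = PtSlope p q := by
    rw [slope_comb h1 h2, ← h]
    have hne : r.1 - p.1 ≠ 0 := by linarith
    field_simp
    ring
  rw [collinear_iff_of_mem (show p ∈ ({p, q, r} : Set Pt) by simp)]
  refine ⟨(1, PtSlope p q), ?_⟩
  have key : ∀ w : Pt, w.1 - p.1 ≠ 0 → PtSlope p w = PtSlope p q →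
      w = (w.1 - p.1) • ((1:ℝ), PtSlope p q) +ᵥ p := by
    intro w hx hw
    have hval : w.2 - p.2 = (w.1 - p.1) * PtSlope p q := by
      rw [← hw]
      unfold PtSlope
      rw [mul_div_cancel₀ _ hx]
    have hfst : ((w.1 - p.1) • ((1:ℝ), PtSlope p q) +ᵥ p).1 = w.1 := by
      simp [Prod.smul_def, smul_eq_mul]
    have hsnd : ((w.1 - p.1) • ((1:ℝ), PtSlope p q) +ᵥ p).2 = w.2 := by
      simp [Prod.smul_def, smul_eq_mul]
      linarith
    exact Prod.ext hfst.symm hsnd.symm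
  intro z hz
  rcases hz with rfl | rfl | rfl
  · exact ⟨0, by simp⟩
  · exact ⟨z.1 - p.1, key z (by intro hh; rw [sub_eq_zero] at hh; linarith) rfl⟩
  · exact ⟨z.1 - p.1, key z (by intro hh; rw [sub_eq_zero] at hh; linarith) hpr⟩

end ESHelpers
section CupLemmas

variable {n : ℕ} {P : Set Pt} {f : ℕ → Pt}

lemma cup_L1 (h : IsCupSeq n P f) {a b : ℕ} (hab : a < b) (hb : b + 1 < n) :
    PtSlope (f a) (f b) < PtSlope (f b) (f (b + 1)) := by
  obtain ⟨hm, hx, hs⟩ := h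
  induction b with
  | zero => omega
  | succ b ih =>
    rcases Nat.lt_or_ge a b with hab' | hab'
    · have h1 := ih hab' (by omega)
      have h2 := hs b (by omega)
      have h3 := (slope_between (hx a b hab' (by omega)) (hx b (b+1) (by omega) (by omega)) h1).2
      linarith
    · have hab2 : a = b := by omega
      subst hab2
      exact hs a (by omega)

lemma cup_slope_lt (h : IsCupSeq n P f) {a b c : ℕ} (hab : a < b) (hbc : b < c)
    (hc : c < n) : PtSlope (f a) (f b) < PtSlope (f b) (f c) := by
  obtain ⟨hm, hx, hs⟩ := h
  induction c with
  | zero => omega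
  | succ c ih =>
    rcases Nat.lt_or_ge b c with h' | h'
    · have h1 := ih h' (by omega)
      have h2 := cup_L1 ⟨hm, hx, hs⟩ h' (by omega)
      have h3 := (slope_between (hx b c h' (by omega)) (hx c (c+1) (by omega) hc) h2).1
      linarith
    · have hbc2 : b = c := by omega
      subst hbc2
      exact cup_L1 ⟨hm, hx, hs⟩ hab hc

lemma cup_chord_left (h : IsCupSeq n P f) {j i : ℕ} (hji : j < i) (hi : i < n) :
    PtSlope (f j) (f (j + 1)) ≤ PtSlope (f j) (f i) := by
  rcases Nat.lt_or_ge (j + 1) i with hlt | hge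
  · have h1 := cup_slope_lt h (Nat.lt_succ_self j) hlt hi
    exact le_of_lt (slope_between (h.2.1 j (j+1) (by omega) (by omega))
      (h.2.1 (j+1) i hlt hi) h1).1
  · have : i = j + 1 := by omega
    subst this
    exact le_refl _

lemma cup_chord_right (h : IsCupSeq n P f) {i j : ℕ} (hij : i < j) (hj : j < n) :
    PtSlope (f i) (f j) ≤ PtSlope (f (j - 1)) (f j) := by
  cases j with
  | zero => omega
  | succ j' =>
    simp only [Nat.add_sub_cancel]
    rcases Nat.lt_or_ge i j' with hlt | hge
    · have h1 := cup_slope_lt h hlt (Nat.lt_succ_self j') hj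
      exact le_of_lt (slope_between (h.2.1 i j' hlt (by omega))
        (h.2.1 j' (j'+1) (by omega) hj) h1).2
    · have : i = j' := by omega
      subst this
      exact le_refl _

/-- A finset is separated if each point is the strict minimum of some linear functional. -/
def SepF (T : Finset Pt) : Prop :=
  ∀ p ∈ T, ∃ a b : ℝ, ∀ q ∈ T, q ≠ p → a * p.1 + b * p.2 < a * q.1 + b * q.2

lemma convexPos_of_sepF {T : Finset Pt} (h : SepF T) : ConvexPos ↑T := by
  intro p hp hmem
  obtain ⟨a, b, hab⟩ := h p (by exact_mod_cast hp)
  have hlin : IsLinearMap ℝ (fun w : Pt => a * w.1 + b * w.2) := by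
    constructor
    · intro x y; simp [Prod.fst_add, Prod.snd_add]; ring
    · intro c x; simp [Prod.smul_fst, Prod.smul_snd, smul_eq_mul]; ring
  have hconv := convex_halfSpace_gt hlin (a * p.1 + b * p.2)
  have hsub : (↑T : Set Pt) \ {p} ⊆ {w : Pt | a * p.1 + b * p.2 < a * w.1 + b * w.2} := by
    rintro q ⟨hq, hq2⟩
    exact hab q (by exact_mod_cast hq) (by simpa using hq2)
  have := convexHull_min hsub hconv hmem
  simp at this

lemma sep_step {p q : Pt} {t : ℝ}
    (h : (q.1 < p.1 ∧ PtSlope q p < t) ∨ (p.1 < q.1 ∧ t < PtSlope p q)) :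
    -t * p.1 + 1 * p.2 < -t * q.1 + 1 * q.2 := by
  unfold PtSlope at h
  rcases h with ⟨hx, hs⟩ | ⟨hx, hs⟩
  · rw [div_lt_iff₀ (by linarith)] at hs; linarith
  · rw [lt_div_iff₀ (by linarith)] at hs; linarith

lemma cup_sepF (h : IsCupSeq n P f) : SepF (Finset.image f (Finset.range n)) := by
  intro p hp
  simp only [Finset.mem_image, Finset.mem_range] at hp
  obtain ⟨j, hj, rfl⟩ := hp
  have hT : ∃ t : ℝ, (1 ≤ j → PtSlope (f (j - 1)) (f j) < t) ∧
      (j + 1 < n → t < PtSlope (f j) (f (j + 1))) := by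
    rcases Nat.eq_zero_or_pos j with rfl | hj1
    · rcases Nat.lt_or_ge (0 + 1) n with h2 | h2
      · exact ⟨PtSlope (f 0) (f 1) - 1, by omega, fun _ => by norm_num⟩
      · exact ⟨0, by omega, fun hh => absurd hh (by omega)⟩
    · rcases Nat.lt_or_ge (j + 1) n with h2 | h2
      · have hss := h.2.2 (j - 1) (by omega)
        have e1 : j - 1 + 1 = j := by omega
        have e2 : j - 1 + 2 = j + 1 := by omega
        rw [e1, e2] at hss
        exact ⟨(PtSlope (f (j - 1)) (f j) + PtSlope (f j) (f (j + 1))) / 2,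
          fun _ => by linarith, fun _ => by linarith⟩
      · exact ⟨PtSlope (f (j - 1)) (f j) + 1, fun _ => by linarith,
          fun hh => absurd hh (by omega)⟩
  obtain ⟨t, htlow, hthigh⟩ := hT
  refine ⟨-t, 1, ?_⟩
  intro q hq hqp
  simp only [Finset.mem_image, Finset.mem_range] at hq
  obtain ⟨i, hi, rfl⟩ := hq
  have hij : i ≠ j := fun e => hqp (by rw [e])
  apply sep_step
  rcases Nat.lt_or_ge i j with hlt | hge
  · left
    refine ⟨h.2.1 i j hlt hj, ?_⟩
    calc PtSlope (f i) (f j) ≤ PtSlope (f (j - 1)) (f j) := cup_chord_right h hlt hj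
    _ < t := htlow (by omega)
  · have hgt : j < i := by omega
    right
    refine ⟨h.2.1 j i hgt hi, ?_⟩
    calc t < PtSlope (f j) (f (j + 1)) := hthigh (by omega)
    _ ≤ PtSlope (f j) (f i) := cup_chord_left h hgt hi

end CupLemmas
section CapLemmas

variable {n : ℕ} {P Q : Set Pt} {f : ℕ → Pt}

def negY (p : Pt) : Pt := (p.1, -p.2)

lemma slope_negY (p q : Pt) : PtSlope (negY p) (negY q) = -PtSlope p q := by
  unfold PtSlope negY
  rw [← neg_div]
  ring_nf

lemma cap_to_cup (h : IsCapSeq n P f) : IsCupSeq n Set.univ (negY ∘ f) := by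
  refine ⟨fun _ _ => trivial, fun i j hij hj => h.2.1 i j hij hj, fun i hi => ?_⟩
  have := h.2.2 i hi
  simp only [Function.comp_apply, slope_negY]
  linarith

lemma cap_sepF (h : IsCapSeq n P f) : SepF (Finset.image f (Finset.range n)) := by
  have hc := cup_sepF (cap_to_cup h)
  intro p hp
  simp only [Finset.mem_image, Finset.mem_range] at hp
  obtain ⟨j, hj, rfl⟩ := hp
  obtain ⟨a, b, hab⟩ := hc (negY (f j)) (by
    simp only [Finset.mem_image, Finset.mem_range]
    exact ⟨j, hj, rfl⟩)
  refine ⟨a, -b, ?_⟩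
  intro q hq hne
  simp only [Finset.mem_image, Finset.mem_range] at hq
  obtain ⟨i, hi, rfl⟩ := hq
  have hne' : negY (f i) ≠ negY (f j) := by
    intro e
    apply hne
    have h1 := congrArg (fun w : Pt => w.1) e
    have h2 := congrArg (fun w : Pt => w.2) e
    simp only [negY] at h1 h2
    exact Prod.ext h1 (by linarith)
  have := hab (negY (f i)) (by
    simp only [Finset.mem_image, Finset.mem_range]
    exact ⟨i, hi, rfl⟩) hne'
  simp only [negY] at this
  linarith

lemma seq_card (hx : ∀ i j, i < j → j < n → (f i).1 < (f j).1) :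
    (Finset.image f (Finset.range n)).card = n := by
  rw [Finset.card_image_of_injOn, Finset.card_range]
  intro i hi j hj hij
  simp only [Finset.coe_range, Set.mem_Iio] at hi hj
  by_contra hne
  rcases Nat.lt_or_ge i j with h' | h'
  · exact absurd (congrArg Prod.fst hij) (ne_of_lt (hx i j h' hj))
  · have h'' : j < i := by omega
    exact absurd (congrArg Prod.fst hij) (ne_of_gt (hx j i h'' hi))

lemma ngon_of_sep {k : ℕ} {T : Finset Pt} {S : Set Pt} (hsub : ↑T ⊆ S)
    (hcard : T.card = k) (hsep : SepF T) : HasConvexNGon k S :=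
  ⟨T, hsub, hcard, convexPos_of_sepF hsep⟩

lemma ngon_of_cup {k : ℕ} {S : Set Pt} (h : HasCup k S) : HasConvexNGon k S := by
  obtain ⟨f, hf⟩ := h
  refine ngon_of_sep ?_ (seq_card hf.2.1) (cup_sepF hf)
  intro x hx
  simp only [Finset.coe_image, Finset.coe_range, Set.mem_image, Set.mem_Iio] at hx
  obtain ⟨i, hi, rfl⟩ := hx
  exact hf.1 i hi

lemma ngon_of_cap {k : ℕ} {S : Set Pt} (h : HasCap k S) : HasConvexNGon k S := by
  obtain ⟨f, hf⟩ := h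
  refine ngon_of_sep ?_ (seq_card hf.2.1) (cap_sepF hf)
  intro x hx
  simp only [Finset.coe_image, Finset.coe_range, Set.mem_image, Set.mem_Iio] at hx
  obtain ⟨i, hi, rfl⟩ := hx
  exact hf.1 i hi

lemma cup_mono (hPQ : P ⊆ Q) (h : IsCupSeq n P f) : IsCupSeq n Q f :=
  ⟨fun i hi => hPQ (h.1 i hi), h.2.1, h.2.2⟩

lemma cap_mono (hPQ : P ⊆ Q) (h : IsCapSeq n P f) : IsCapSeq n Q f :=
  ⟨fun i hi => hPQ (h.1 i hi), h.2.1, h.2.2⟩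

lemma hasCup_two {p q : Pt} (hp : p ∈ P) (hq : q ∈ P) (hx : p.1 < q.1) : HasCup 2 P := by
  refine ⟨fun i => if i = 0 then p else q, fun i hi => ?_, fun i j hij hj => ?_, fun i hi => by omega⟩
  · interval_cases i <;> simp [hp, hq]
  · have : i = 0 ∧ j = 1 := by omega
    obtain ⟨rfl, rfl⟩ := this
    simpa using hx

lemma hasCap_two {p q : Pt} (hp : p ∈ P) (hq : q ∈ P) (hx : p.1 < q.1) : HasCap 2 P := by
  refine ⟨fun i => if i = 0 then p else q, fun i hi => ?_, fun i j hij hj => ?_, fun i hi => by omega⟩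
  · interval_cases i <;> simp [hp, hq]
  · have : i = 0 ∧ j = 1 := by omega
    obtain ⟨rfl, rfl⟩ := this
    simpa using hx

lemma cup_extend (h : IsCupSeq n P f) (hn : 2 ≤ n) {q : Pt} (hq : q ∈ P)
    (hxq : (f (n - 1)).1 < q.1)
    (hsq : PtSlope (f (n - 2)) (f (n - 1)) < PtSlope (f (n - 1)) q) :
    HasCup (n + 1) P := by
  obtain ⟨hm, hx, hs⟩ := h
  refine ⟨fun i => if i < n then f i else q, fun i hi => ?_, fun i j hij hj => ?_, fun i hi => ?_⟩
  · by_cases h' : i < n <;> simp [h', hm, hq]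
  · by_cases hj' : j < n
    · simp only [if_pos (by omega : i < n), if_pos hj']
      exact hx i j hij hj'
    · have hjn : j = n := by omega
      simp only [if_pos (by omega : i < n), if_neg (by omega : ¬ j < n)]
      rcases Nat.lt_or_ge i (n - 1) with h'' | h''
      · exact lt_trans (hx i (n - 1) h'' (by omega)) hxq
      · have hin : i = n - 1 := by omega
        rw [hin]
        exact hxq
  · by_cases h' : i + 2 < n
    · simp only [if_pos (by omega : i < n), if_pos (by omega : i + 1 < n), if_pos h']
      exact hs i h'
    · have h2 : i + 2 = n := by omega
      have e1 : i = n - 2 := by omega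
      have e2 : i + 1 = n - 1 := by omega
      simp only [if_pos (by omega : i < n), if_pos (by omega : i + 1 < n),
        if_neg (by omega : ¬ i + 2 < n)]
      rw [e2, e1]
      exact hsq

lemma cap_prepend {g : ℕ → Pt} (h : IsCapSeq n P g) (hn : 2 ≤ n) {q : Pt} (hq : q ∈ P)
    (hxq : q.1 < (g 0).1)
    (hsq : PtSlope (g 0) (g 1) < PtSlope q (g 0)) :
    HasCap (n + 1) P := by
  obtain ⟨hm, hx, hs⟩ := h
  refine ⟨fun i => if i = 0 then q else g (i - 1), fun i hi => ?_, fun i j hij hj => ?_,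
    fun i hi => ?_⟩
  · by_cases h' : i = 0
    · subst h'
      simpa using hq
    · simp only [if_neg h']
      exact hm (i - 1) (by omega)
  · by_cases hi' : i = 0
    · subst hi'
      simp only [if_pos rfl, if_neg (by omega : ¬ j = 0)]
      rcases Nat.lt_or_ge 0 (j - 1) with h'' | h''
      · exact lt_trans hxq (hx 0 (j - 1) h'' (by omega))
      · have : j = 1 := by omega
        subst this
        simpa using hxq
    · simp only [if_neg hi', if_neg (by omega : ¬ j = 0)]
      exact hx (i - 1) (j - 1) (by omega) (by omega)
  · by_cases hi' : i = 0
    · subst hi'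
      simp only [if_pos rfl, if_neg (by omega : ¬ (0:ℕ) + 1 = 0),
        if_neg (by omega : ¬ (0:ℕ) + 2 = 0)]
      norm_num
      exact hsq
    · simp only [if_neg hi', if_neg (by omega : ¬ i + 1 = 0), if_neg (by omega : ¬ i + 2 = 0)]
      have e1 : i + 1 - 1 = (i - 1) + 1 := by omega
      have e2 : i + 2 - 1 = (i - 1) + 2 := by omega
      rw [e1, e2]
      exact hs (i - 1) (by omega)

end CapLemmas
section Counting

lemma genPos_mono {P Q : Set Pt} (hPQ : P ⊆ Q) (h : GenPos Q) : GenPos P :=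
  fun p hp q hq r hr => h p (hPQ hp) q (hPQ hq) r (hPQ hr)

lemma distinctX_mono {P Q : Set Pt} (hPQ : P ⊆ Q) (h : DistinctX Q) : DistinctX P :=
  fun p hp q hq => h p (hPQ hp) q (hPQ hq)

lemma cupcap_count : ∀ N m k : ℕ, m + k ≤ N → 2 ≤ m → 2 ≤ k →
    ∀ S : Finset Pt, GenPos ↑S → DistinctX ↑S →
    Nat.choose (m + k - 4) (k - 2) < S.card → HasCup m ↑S ∨ HasCap k ↑S := by
  intro N
  induction N with
  | zero => intro m k h; omega
  | succ N ih =>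
    intro m k hN hm hk S hgp hdx hcard
    classical
    -- helper to extract two points
    have two_points : 1 < S.card → ∃ p ∈ S, ∃ q ∈ S, p.1 < q.1 := by
      intro h1
      obtain ⟨p, hp, q, hq, hpq⟩ := Finset.one_lt_card.mp h1
      rcases lt_or_gt_of_ne (hdx p hp q hq hpq) with h' | h'
      · exact ⟨p, hp, q, hq, h'⟩
      · exact ⟨q, hq, p, hp, h'⟩
    rcases eq_or_lt_of_le hm with hm2 | hm3
    · -- m = 2
      left
      have hc2 : 1 < S.card := by
        have e : 2 + k - 4 = k - 2 := by omega
        rw [← hm2, e, Nat.choose_self] at hcard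
        omega
      obtain ⟨p, hp, q, hq, h'⟩ := two_points hc2
      rw [← hm2]
      exact hasCup_two hp hq h'
    rcases eq_or_lt_of_le hk with hk2 | hk3
    · -- k = 2
      right
      have hc2 : 1 < S.card := by
        rw [← hk2] at hcard
        simpa using hcard
      obtain ⟨p, hp, q, hq, h'⟩ := two_points hc2
      rw [← hk2]
      exact hasCap_two hp hq h'
    -- now 3 ≤ m, 3 ≤ k
    have hm3' : 3 ≤ m := hm3
    have hk3' : 3 ≤ k := hk3
    set E := S.filter (fun p => ∃ f : ℕ → Pt, IsCupSeq (m - 1) ↑S f ∧ f (m - 2) = p) with hE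
    have hEsub : E ⊆ S := Finset.filter_subset _ _
    have hEsub' : (↑E : Set Pt) ⊆ ↑S := Finset.coe_subset.mpr hEsub
    have hSdsub : (↑(S \ E) : Set Pt) ⊆ ↑S := Finset.coe_subset.mpr (Finset.sdiff_subset)
    rcases Nat.lt_or_ge (Nat.choose (m + k - 5) (k - 2)) ((S \ E).card) with hbig | hsmall
    · have hih := ih (m - 1) k (by omega) (by omega) hk (S \ E)
        (genPos_mono hSdsub hgp) (distinctX_mono hSdsub hdx)
        (by
          have e : m - 1 + k - 4 = m + k - 5 := by omega
          rw [e]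
          exact hbig)
      rcases hih with hcup | hcap
      · exfalso
        obtain ⟨f, hf⟩ := hcup
        have hfS : IsCupSeq (m - 1) ↑S f := cup_mono hSdsub hf
        have hlast : f (m - 2) ∈ S \ E := by
          have := hf.1 (m - 2) (by omega)
          exact_mod_cast this
        have hmemE : f (m - 2) ∈ E := by
          rw [hE, Finset.mem_filter]
          exact ⟨(Finset.mem_sdiff.mp hlast).1, f, hfS, rfl⟩
        exact (Finset.mem_sdiff.mp hlast).2 hmemE
      · right
        obtain ⟨g, hg⟩ := hcap
        exact ⟨g, cap_mono hSdsub hg⟩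
    · -- E is big
      have hEcard : Nat.choose (m + k - 5) (k - 3) < E.card := by
        have hp : Nat.choose (m + k - 4) (k - 2) =
            Nat.choose (m + k - 5) (k - 3) + Nat.choose (m + k - 5) (k - 2) := by
          have e1 : m + k - 4 = (m + k - 5) + 1 := by omega
          have e2 : k - 2 = (k - 3) + 1 := by omega
          rw [e1, e2, Nat.choose_succ_succ]
        have hsd := Finset.card_sdiff_add_card_eq_card hEsub
        omega
      have hih := ih m (k - 1) (by omega) hm (by omega) E
        (genPos_mono hEsub' hgp) (distinctX_mono hEsub' hdx)
        (by
          have e1 : m + (k - 1) - 4 = m + k - 5 := by omega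
          have e2 : k - 1 - 2 = k - 3 := by omega
          rw [e1, e2]
          exact hEcard)
      rcases hih with hcup | hcap
      · left
        obtain ⟨g, hg⟩ := hcup
        exact ⟨g, cup_mono hEsub' hg⟩
      · -- a (k-1)-cap in E
        obtain ⟨g, hg⟩ := hcap
        have hg0 : g 0 ∈ E := by
          have := hg.1 0 (by omega)
          exact_mod_cast this
        rw [hE, Finset.mem_filter] at hg0
        obtain ⟨hg0S, f, hf, hfg⟩ := hg0
        have hgS : IsCapSeq (k - 1) ↑S g := cap_mono hEsub' hg
        -- key points: A = f (m-3), B = f (m-2) = g 0, C = g 1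
        have hg1S : g 1 ∈ (↑S : Set Pt) := hgS.1 1 (by omega)
        have hfm3 : f (m - 3) ∈ (↑S : Set Pt) := hf.1 (m - 3) (by omega)
        have hxAB : (f (m - 3)).1 < (f (m - 2)).1 := hf.2.1 (m - 3) (m - 2) (by omega) (by omega)
        have hxBC : (f (m - 2)).1 < (g 1).1 := by
          rw [hfg]
          exact hgS.2.1 0 1 (by omega) (by omega)
        rcases lt_or_ge (PtSlope (f (m - 3)) (f (m - 2))) (PtSlope (g 0) (g 1)) with hlt | hge
        · left
          have hext := cup_extend hf (by omega) hg1S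
            (by
              have e : m - 1 - 1 = m - 2 := by omega
              rw [e, hfg]
              exact hgS.2.1 0 1 (by omega) (by omega))
            (by
              have e1 : m - 1 - 1 = m - 2 := by omega
              have e2 : m - 1 - 2 = m - 3 := by omega
              rw [e1, e2]
              calc PtSlope (f (m - 3)) (f (m - 2)) < PtSlope (g 0) (g 1) := hlt
              _ = PtSlope (f (m - 2)) (g 1) := by rw [hfg])
          have e : m - 1 + 1 = m := by omega
          rwa [e] at hext
        · right
          -- strict inequality via general position
          have hne : PtSlope (f (m - 3)) (f (m - 2)) ≠ PtSlope (g 0) (g 1) := by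
            intro heq
            have heq' : PtSlope (f (m - 3)) (f (m - 2)) = PtSlope (f (m - 2)) (g 1) := by
              rw [heq, hfg]
            have hcol := collinear_of_slope_eq hxAB hxBC heq'
            have hfm2 : f (m - 2) ∈ (↑S : Set Pt) := hf.1 (m - 2) (by omega)
            exact hgp (f (m - 3)) hfm3 (f (m - 2)) hfm2 (g 1) hg1S
              (fun e => absurd (congrArg (fun w : Pt => w.1) e) (ne_of_lt hxAB))
              (fun e => absurd (congrArg (fun w : Pt => w.1) e) (ne_of_lt (lt_trans hxAB hxBC)))
              (fun e => absurd (congrArg (fun w : Pt => w.1) e) (ne_of_lt hxBC))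
              hcol
          have hgt : PtSlope (g 0) (g 1) < PtSlope (f (m - 3)) (f (m - 2)) :=
            lt_of_le_of_ne hge (Ne.symm hne)
          have hext := cap_prepend hgS (by omega) hfm3
            (by rw [hfg] at hxAB; exact hxAB)
            (by
              calc PtSlope (g 0) (g 1) < PtSlope (f (m - 3)) (f (m - 2)) := hgt
              _ = PtSlope (f (m - 3)) (g 0) := by rw [hfg])
          have e : k - 1 + 1 = k := by omega
          rwa [e] at hext

end Counting

section Shear

noncomputable def shear (c : ℝ) (p : Pt) : Pt := (p.1 + c * p.2, p.2)

lemma shear_inj (c : ℝ) : Function.Injective (shear c) := by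
  intro p q h
  have h1 := congrArg (fun w : Pt => w.1) h
  have h2 := congrArg (fun w : Pt => w.2) h
  simp only [shear] at h1 h2
  rw [h2] at h1
  exact Prod.ext (by linarith) h2

lemma shear_shear (c : ℝ) (p : Pt) : shear c (shear (-c) p) = p := by
  simp [shear]

lemma collinear_shear {c : ℝ} {p q r : Pt}
    (h : Collinear ℝ ({shear c p, shear c q, shear c r} : Set Pt)) :
    Collinear ℝ ({p, q, r} : Set Pt) := by
  rw [collinear_iff_of_mem (show shear c p ∈ ({shear c p, shear c q, shear c r} : Set Pt)
    by simp)] at h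
  obtain ⟨v, hv⟩ := h
  rw [collinear_iff_of_mem (show p ∈ ({p, q, r} : Set Pt) by simp)]
  refine ⟨(v.1 - c * v.2, v.2), ?_⟩
  have key : ∀ z : Pt, (∃ t : ℝ, shear c z = t • v +ᵥ shear c p) →
      ∃ t : ℝ, z = t • (v.1 - c * v.2, v.2) +ᵥ p := by
    intro z ⟨t, ht⟩
    have h1 := congrArg (fun w : Pt => w.1) ht
    have h2 := congrArg (fun w : Pt => w.2) ht
    simp only [shear, Prod.smul_def, smul_eq_mul, vadd_eq_add, Prod.mk_add_mk,
      Prod.fst_add, Prod.snd_add] at h1 h2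
    refine ⟨t, ?_⟩
    have hfst : (t • ((v.1 - c * v.2, v.2) : Pt) +ᵥ p).1 = z.1 := by
      simp only [Prod.smul_def, smul_eq_mul, vadd_eq_add, Prod.mk_add_mk, Prod.fst_add]
      show t * (v.1 - c * v.2) + p.1 = z.1
      linear_combination (-1 : ℝ) * h1 + c * h2
    have hsnd : (t • ((v.1 - c * v.2, v.2) : Pt) +ᵥ p).2 = z.2 := by
      simp only [Prod.smul_def, smul_eq_mul, vadd_eq_add, Prod.mk_add_mk, Prod.snd_add]
      show t * v.2 + p.2 = z.2
      linear_combination (-1 : ℝ) * h2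
    exact (Prod.ext hfst hsnd).symm
  intro z hz
  rcases hz with rfl | rfl | rfl
  · exact key z (hv (shear c z) (by simp))
  · exact key z (hv (shear c z) (by simp))
  · exact key z (hv (shear c z) (by simp))

lemma genPos_shear {S : Finset Pt} (h : GenPos ↑S) (c : ℝ) :
    GenPos ↑(S.image (shear c)) := by
  intro p hp q hq r hr hpq hpr hqr hcol
  simp only [Finset.coe_image, Set.mem_image, Finset.mem_coe] at hp hq hr
  obtain ⟨p0, hp0, rfl⟩ := hp
  obtain ⟨q0, hq0, rfl⟩ := hq
  obtain ⟨r0, hr0, rfl⟩ := hr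
  exact h p0 hp0 q0 hq0 r0 hr0
    (fun e => hpq (congrArg (shear c) e))
    (fun e => hpr (congrArg (shear c) e))
    (fun e => hqr (congrArg (shear c) e))
    (collinear_shear hcol)

lemma exists_good_c (S : Finset Pt) : ∃ c : ℝ, DistinctX ↑(S.image (shear c)) := by
  classical
  obtain ⟨c, hc⟩ := Infinite.exists_notMem_finset
    ((S ×ˢ S).image (fun pq : Pt × Pt => (pq.2.1 - pq.1.1) / (pq.1.2 - pq.2.2)))
  refine ⟨c, ?_⟩
  intro p hp q hq hne heq
  simp only [Finset.coe_image, Set.mem_image, Finset.mem_coe] at hp hq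
  obtain ⟨p0, hp0, rfl⟩ := hp
  obtain ⟨q0, hq0, rfl⟩ := hq
  simp only [shear] at heq
  by_cases hy : p0.2 = q0.2
  · have hx : p0.1 = q0.1 := by
      rw [hy] at heq
      linarith
    exact hne (congrArg (shear c) (Prod.ext hx hy))
  · apply hc
    simp only [Finset.mem_image, Finset.mem_product]
    refine ⟨(p0, q0), ⟨hp0, hq0⟩, ?_⟩
    have hd : p0.2 - q0.2 ≠ 0 := fun e => hy (by linarith)
    field_simp
    linarith

lemma sepF_shear {c : ℝ} {T : Finset Pt}
    (h : SepF (T.image (shear c))) : SepF T := by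
  intro p hp
  obtain ⟨a, b, hab⟩ := h (shear c p) (Finset.mem_image_of_mem _ hp)
  refine ⟨a, a * c + b, fun q hq hne => ?_⟩
  have := hab (shear c q) (Finset.mem_image_of_mem _ hq)
    (fun e => hne (shear_inj c e))
  simp only [shear] at this
  ring_nf
  ring_nf at this
  linarith

lemma ngon_pullback {c : ℝ} {S : Finset Pt} {n : ℕ} {T' : Finset Pt}
    (hsub : ↑T' ⊆ (↑(S.image (shear c)) : Set Pt)) (hcardT : T'.card = n)
    (hsep : SepF T') : HasConvexNGon n ↑S := by
  classical
  refine ngon_of_sep (S := (↑S : Set Pt)) (T := T'.image (shear (-c))) ?_ ?_ ?_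
  · intro x hx
    simp only [Finset.coe_image, Set.mem_image, Finset.mem_coe] at hx
    obtain ⟨t, ht, rfl⟩ := hx
    have ht' := hsub ht
    simp only [Finset.coe_image, Set.mem_image, Finset.mem_coe] at ht'
    obtain ⟨s, hs, rfl⟩ := ht'
    have : shear (-c) (shear c s) = s := by
      have := shear_shear (-c) s
      simpa using this
    rw [this]
    exact hs
  · rw [Finset.card_image_of_injective _ (shear_inj _), hcardT]
  · apply sepF_shear (c := c)
    rw [Finset.image_image]
    have he : shear c ∘ shear (-c) = id := funext fun p => shear_shear c p
    rw [he, Finset.image_id]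
    exact hsep

lemma main_ngon (n : ℕ) (hn : 3 ≤ n) (S : Finset Pt) (hgp : GenPos ↑S)
    (hcard : Nat.choose (2 * n - 4) (n - 2) + 1 ≤ S.card) : HasConvexNGon n ↑S := by
  classical
  obtain ⟨c, hdx⟩ := exists_good_c S
  have hgp' : GenPos ↑(S.image (shear c)) := genPos_shear hgp c
  have hcard' : Nat.choose (n + n - 4) (n - 2) < (S.image (shear c)).card := by
    rw [Finset.card_image_of_injective _ (shear_inj c)]
    have e : n + n - 4 = 2 * n - 4 := by omega
    rw [e]
    omega
  rcases cupcap_count (n + n) n n le_rfl (by omega) (by omega) (S.image (shear c))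
    hgp' hdx hcard' with h | h
  · obtain ⟨f, hf⟩ := h
    refine ngon_pullback (c := c) (T' := Finset.image f (Finset.range n)) ?_
      (seq_card hf.2.1) (cup_sepF hf)
    intro x hx
    simp only [Finset.coe_image, Finset.coe_range, Set.mem_image, Set.mem_Iio] at hx
    obtain ⟨i, hi, rfl⟩ := hx
    exact hf.1 i hi
  · obtain ⟨f, hf⟩ := h
    refine ngon_pullback (c := c) (T' := Finset.image f (Finset.range n)) ?_
      (seq_card hf.2.1) (cap_sepF hf)
    intro x hx
    simp only [Finset.coe_image, Finset.coe_range, Set.mem_image, Set.mem_Iio] at hx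
    obtain ⟨i, hi, rfl⟩ := hx
    exact hf.1 i hi

end Shear


/-- For every `n ≥ 3`, every set of `C(2n-4, n-2) + 1` points in general
position in the plane contains `n` points in convex position; that is,
`f(n) ≤ C(2n-4, n-2) + 1`. -/
theorem stmt_2 (n : ℕ) (hn : 3 ≤ n) (fn : ℕ) (hfn : IsESNumber n fn) :
    fn ≤ Nat.choose (2 * n - 4) (n - 2) + 1 ∧
      ∀ S : Finset Pt, GenPos ↑S → S.card = Nat.choose (2 * n - 4) (n - 2) + 1 →
        HasConvexNGon n ↑S := by
  have main : ∀ S : Finset Pt, GenPos ↑S → S.card = Nat.choose (2 * n - 4) (n - 2) + 1 →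
      HasConvexNGon n ↑S := fun S h hc => main_ngon n hn S h (le_of_eq hc.symm)
  exact ⟨hfn.2 ⟨Nat.succ_pos _, main⟩, main⟩
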